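/- Fix a ∈ ℝ and r > 0, and set k₀ = a + √(a² + 1/r). For each T > 0 with a·T < 1, define on the interval (a, k^u(a,T)) the function J_T(k) = (1 + r·k²)·f_{a,T}(k), where f_{a,T}(k) = (−k·sinh(ℓT) − ℓ)/(2ℓ·(a − k·cosh(ℓT))) with ℓ = √(a² − k²) if |k| < −a; f_{a,T}(k) = T/4 + 1/(4|a|) if k = |a| and a ≠ 0; and f_{a,T}(k) = (−k·sin(ℓT) − ℓ)/(2ℓ·(a − k·cos(ℓT))) with ℓ = √(k² − a²) if |a| < k < k^u(a,T). Suppose that for every sufficiently small T > 0 there is a point k*(T) ∈ (a, k^u(a,T)) with J_T(k*(T)) ≤ J_T(k) for all k ∈ (a, k^u(a,T)). Then lim_{T→0⁺} k*(T) / ( k₀ − (a·k₀ + 1/r)·T ) = 1. -/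

import Mathlib

lemma my_sinh_le_mul_cosh {t : ℝ} (ht : 0 ≤ t) : Real.sinh t ≤ t * Real.cosh t := by
  have h : ∀ x : ℝ, HasDerivAt (fun u => u * Real.cosh u - Real.sinh u)
      (x * Real.sinh x) x := by
    intro x
    have h1 : HasDerivAt (fun u : ℝ => u * Real.cosh u) (1 * Real.cosh x + x * Real.sinh x) x :=
      (hasDerivAt_id x).mul (Real.hasDerivAt_cosh x)
    have := h1.sub (Real.hasDerivAt_sinh x)
    exact this.congr_deriv (by ring)
  have hm : MonotoneOn (fun u : ℝ => u * Real.cosh u - Real.sinh u) (Set.Ici 0) := by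
    apply monotoneOn_of_deriv_nonneg (convex_Ici 0)
    · exact fun x _ => (h x).continuousAt.continuousWithinAt
    · exact fun x _ => (h x).differentiableAt.differentiableWithinAt
    · intro x hx
      rw [interior_Ici] at hx
      rw [(h x).deriv]
      exact mul_nonneg (le_of_lt hx) (Real.sinh_nonneg_iff.mpr (le_of_lt hx))
  have := hm (Set.self_mem_Ici) (Set.mem_Ici.mpr ht) ht
  simp only [Real.sinh_zero, Real.cosh_zero, mul_one, zero_sub, neg_zero, mul_zero] at this
  linarith

lemma my_cosh_le_one_add_sq {t : ℝ} (ht0 : 0 ≤ t) (ht1 : t ≤ 1) : Real.cosh t ≤ 1 + t ^ 2 := by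
  have h2 : Real.cosh t = 1 + 2 * Real.sinh (t/2) ^ 2 := by
    have h := Real.cosh_two_mul (t/2)
    have hsq := Real.cosh_sq (t/2)
    rw [show 2 * (t/2) = t by ring] at h
    rw [h, hsq]; ring
  have hs : Real.sinh (t/2) ≤ (t/2) * Real.cosh (t/2) := my_sinh_le_mul_cosh (by linarith)
  have hs0 : 0 ≤ Real.sinh (t/2) := Real.sinh_nonneg_iff.mpr (by linarith)
  have hc1 : Real.cosh (t/2) ^ 2 ≤ 3/2 := by
    have hmono : Real.cosh (t/2) ≤ Real.cosh (1/2) := by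
      rw [Real.cosh_le_cosh, abs_of_nonneg (by linarith), abs_of_nonneg (by norm_num)]
      linarith
    have h12 : Real.cosh (1/2) ^ 2 ≤ 3/2 := by
      have h := Real.cosh_two_mul (1/2)
      have hsq := Real.cosh_sq (1/2)
      have hch1 : Real.cosh 1 ≤ 2 := by
        rw [Real.cosh_eq]
        have h1 : Real.exp 1 ≤ 3 := by
          have := Real.exp_one_lt_d9; linarith
        have h2' : Real.exp (-1 : ℝ) ≤ 1 := Real.exp_le_one_iff.mpr (by norm_num)
        linarith
      rw [show (2:ℝ) * (1/2) = 1 by norm_num] at h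
      nlinarith [Real.cosh_pos (1/2)]
    nlinarith [Real.cosh_pos (t/2), Real.cosh_pos (1/2)]
  nlinarith [sq_nonneg (t/2), Real.cosh_pos (t/2)]

lemma phi_strictAnti (a : ℝ) :
    StrictAntiOn (fun k => Real.arccos (a / k) / Real.sqrt (k ^ 2 - a ^ 2)) (Set.Ioi |a|) := by
  have key : ∀ x ∈ Set.Ioi |a|, HasDerivAt
      (fun k => Real.arccos (a / k) / Real.sqrt (k ^ 2 - a ^ 2))
      ((a / x - Real.arccos (a / x) * (x / Real.sqrt (x ^ 2 - a ^ 2))) / (x ^ 2 - a ^ 2)) x := by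
    intro x hx
    rw [Set.mem_Ioi] at hx
    have hx0 : 0 < x := lt_of_le_of_lt (abs_nonneg a) hx
    have hax : |a / x| < 1 := by
      rw [abs_div, abs_of_pos hx0, div_lt_one hx0]; exact hx
    have hax1 : a / x ≠ 1 := by intro h; rw [h] at hax; simp at hax
    have hax2 : a / x ≠ -1 := by intro h; rw [h] at hax; simp at hax
    have hsq : 0 < x ^ 2 - a ^ 2 := by
      have := sq_abs a
      nlinarith [abs_nonneg a]
    have hls : 0 < Real.sqrt (x ^ 2 - a ^ 2) := Real.sqrt_pos.mpr hsq
    -- derivative of a / k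
    have hd1 : HasDerivAt (fun k : ℝ => a / k) (-(a / x ^ 2)) x := by
      have := (hasDerivAt_inv (ne_of_gt hx0)).const_mul a
      simpa [div_eq_mul_inv, neg_div] using this.congr_deriv (by ring)
    -- derivative of arccos (a / k)
    have hd2 : HasDerivAt (fun k : ℝ => Real.arccos (a / k))
        (-(1 / Real.sqrt (1 - (a / x) ^ 2)) * (-(a / x ^ 2))) x :=
      (Real.hasDerivAt_arccos hax2 hax1).comp x hd1
    -- derivative of sqrt (k^2 - a^2)
    have hd3 : HasDerivAt (fun k : ℝ => k ^ 2 - a ^ 2) (2 * x) x := by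
      simpa using ((hasDerivAt_pow 2 x).sub_const (a ^ 2))
    have hd4 : HasDerivAt (fun k : ℝ => Real.sqrt (k ^ 2 - a ^ 2))
        (1 / (2 * Real.sqrt (x ^ 2 - a ^ 2)) * (2 * x)) x :=
      (Real.hasDerivAt_sqrt (ne_of_gt hsq)).comp x hd3
    have hsimp : Real.sqrt (1 - (a / x) ^ 2) = Real.sqrt (x ^ 2 - a ^ 2) / x := by
      rw [show 1 - (a / x) ^ 2 = (x ^ 2 - a ^ 2) / x ^ 2 by field_simp,
        Real.sqrt_div hsq.le, Real.sqrt_sq hx0.le]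
    have := hd2.div hd4 (ne_of_gt hls)
    refine HasDerivAt.congr_deriv this ?_
    rw [hsimp, Real.sq_sqrt hsq.le]
    field_simp
  apply strictAntiOn_of_deriv_neg (convex_Ioi _)
  · exact fun x hx => (key x hx).continuousAt.continuousWithinAt
  · intro x hx
    rw [interior_Ioi] at hx
    rw [(key x hx).deriv]
    have hx' := hx
    rw [Set.mem_Ioi] at hx'
    have hx0 : 0 < x := lt_of_le_of_lt (abs_nonneg a) hx'
    have hsq : 0 < x ^ 2 - a ^ 2 := by
      have := sq_abs a
      nlinarith [abs_nonneg a]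
    have hls : 0 < Real.sqrt (x ^ 2 - a ^ 2) := Real.sqrt_pos.mpr hsq
    apply div_neg_of_neg_of_pos _ hsq
    rw [sub_neg]
    -- need : a / x < arccos (a/x) * (x / sqrt (x^2-a^2))
    have hax : |a / x| < 1 := by
      rw [abs_div, abs_of_pos hx0, div_lt_one hx0]; exact hx'
    have h1 : a / x * (Real.sqrt (x ^ 2 - a ^ 2) / x) < Real.arccos (a / x) := by
      have hsin : Real.sqrt (x ^ 2 - a ^ 2) / x = Real.sin (Real.arccos (a / x)) := by
        rw [Real.sin_arccos, show 1 - (a / x) ^ 2 = (x ^ 2 - a ^ 2) / x ^ 2 by field_simp,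
          Real.sqrt_div hsq.le, Real.sqrt_sq hx0.le]
      rw [hsin]
      have harcpos : 0 < Real.arccos (a / x) := Real.arccos_pos.mpr (by
        cases' abs_lt.mp hax with _ h; exact h)
      rcases le_or_gt (a / x) 0 with hc | hc
      · have : 0 ≤ Real.sin (Real.arccos (a / x)) := by
          apply Real.sin_nonneg_of_nonneg_of_le_pi (Real.arccos_nonneg _) (Real.arccos_le_pi _)
        nlinarith
      · have hsin_lt : Real.sin (Real.arccos (a / x)) < Real.arccos (a / x) :=
          Real.sin_lt harcpos
        have hd1 : a / x ≤ 1 := (abs_lt.mp hax).2.le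
        have : 0 ≤ Real.sin (Real.arccos (a / x)) :=
          Real.sin_nonneg_of_nonneg_of_le_pi (Real.arccos_nonneg _) (Real.arccos_le_pi _)
        nlinarith
    calc a / x = (a / x * (Real.sqrt (x ^ 2 - a ^ 2) / x)) * (x / Real.sqrt (x ^ 2 - a ^ 2)) := by
          field_simp
      _ < Real.arccos (a / x) * (x / Real.sqrt (x ^ 2 - a ^ 2)) := by
          apply mul_lt_mul_of_pos_right h1 (div_pos hx0 hls)

lemma F_hasDeriv (a r x : ℝ) (hx : x ≠ a) :
    HasDerivAt (fun k => (1 + r * k ^ 2) / (2 * (k - a)))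
      ((r * x ^ 2 - 2 * a * r * x - 1) / (2 * (x - a) ^ 2)) x := by
  have hnum : HasDerivAt (fun k : ℝ => 1 + r * k ^ 2) (r * (2 * x)) x := by
    simpa using (((hasDerivAt_pow 2 x)).const_mul r).const_add 1
  have hden : HasDerivAt (fun k : ℝ => 2 * (k - a)) 2 x := by
    simpa using ((hasDerivAt_id x).sub_const a).const_mul 2
  have hden0 : 2 * (x - a) ≠ 0 := by
    intro h; apply hx; have := mul_eq_zero.mp h; rcases this with h | h
    · norm_num at h
    · linarith [sub_eq_zero.mp h]
  have := hnum.div hden hden0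
  refine HasDerivAt.congr_deriv this ?_
  have hxa : x - a ≠ 0 := sub_ne_zero.mpr hx
  field_simp
  ring

lemma F_anti (a r : ℝ) (hr : 0 < r) :
    StrictAntiOn (fun k => (1 + r * k ^ 2) / (2 * (k - a)))
      (Set.Ioc a (a + Real.sqrt (a ^ 2 + 1 / r))) := by
  have hspos : 0 < a ^ 2 + 1 / r := by positivity
  have hs : Real.sqrt (a ^ 2 + 1 / r) ^ 2 = a ^ 2 + 1 / r := Real.sq_sqrt hspos.le
  have hs0 : 0 < Real.sqrt (a ^ 2 + 1 / r) := Real.sqrt_pos.mpr hspos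
  apply strictAntiOn_of_deriv_neg (convex_Ioc _ _)
  · intro x hx
    exact (F_hasDeriv a r x (ne_of_gt hx.1)).continuousAt.continuousWithinAt
  · intro x hx
    rw [interior_Ioc] at hx
    rw [(F_hasDeriv a r x (ne_of_gt hx.1)).deriv]
    apply div_neg_of_neg_of_pos
    · have h1 : x - a < Real.sqrt (a ^ 2 + 1 / r) := by linarith [hx.2]
      have h2 : 0 < x - a := by linarith [hx.1]
      have hrs : r * Real.sqrt (a ^ 2 + 1 / r) ^ 2 = r * a ^ 2 + 1 := by
        rw [hs]; field_simp
      have h3 : (x - a) ^ 2 < Real.sqrt (a ^ 2 + 1 / r) ^ 2 := by nlinarith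
      nlinarith [mul_lt_mul_of_pos_left h3 hr]
    · have h2 : 0 < x - a := by linarith [hx.1]
      positivity

lemma F_mono (a r : ℝ) (hr : 0 < r) :
    StrictMonoOn (fun k => (1 + r * k ^ 2) / (2 * (k - a)))
      (Set.Ici (a + Real.sqrt (a ^ 2 + 1 / r))) := by
  have hspos : 0 < a ^ 2 + 1 / r := by positivity
  have hs : Real.sqrt (a ^ 2 + 1 / r) ^ 2 = a ^ 2 + 1 / r := Real.sq_sqrt hspos.le
  have hs0 : 0 < Real.sqrt (a ^ 2 + 1 / r) := Real.sqrt_pos.mpr hspos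
  apply strictMonoOn_of_deriv_pos (convex_Ici _)
  · intro x hx
    rw [Set.mem_Ici] at hx
    exact (F_hasDeriv a r x (by intro h; rw [h] at hx; linarith)).continuousAt.continuousWithinAt
  · intro x hx
    rw [interior_Ici, Set.mem_Ioi] at hx
    rw [(F_hasDeriv a r x (by intro h; rw [h] at hx; linarith)).deriv]
    apply div_pos
    · have h1 : Real.sqrt (a ^ 2 + 1 / r) < x - a := by linarith
      have hrs : r * Real.sqrt (a ^ 2 + 1 / r) ^ 2 = r * a ^ 2 + 1 := by
        rw [hs]; field_simp
      have h3 : Real.sqrt (a ^ 2 + 1 / r) ^ 2 < (x - a) ^ 2 := by nlinarith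
      nlinarith [mul_lt_mul_of_pos_left h3 hr]
    · have h2 : 0 < x - a := by linarith
      positivity

open scoped Classical in
/-- The squared `L²`-norm of the fundamental solution of `dx/dt = a x(t) - k x(t-T)`,
for a stabilizing gain `k`. -/
noncomputable def fdel (T a k : ℝ) : ℝ :=
  if |k| < -a then
    (-k * Real.sinh (Real.sqrt (a ^ 2 - k ^ 2) * T) - Real.sqrt (a ^ 2 - k ^ 2)) /
      (2 * Real.sqrt (a ^ 2 - k ^ 2) *
        (a - k * Real.cosh (Real.sqrt (a ^ 2 - k ^ 2) * T)))
  else if k = |a| ∧ a ≠ 0 then T / 4 + 1 / (4 * |a|)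
  else
    (-k * Real.sin (Real.sqrt (k ^ 2 - a ^ 2) * T) - Real.sqrt (k ^ 2 - a ^ 2)) /
      (2 * Real.sqrt (k ^ 2 - a ^ 2) *
        (a - k * Real.cos (Real.sqrt (k ^ 2 - a ^ 2) * T)))

set_option maxHeartbeats 4000000 in
lemma fdel_lower_hyp (a T K k : ℝ) (hT : 0 < T) (hTa : T * (|a| + 1) ≤ 1 / 2)
    (hKa : |a| < K) (hKeq : T * Real.sqrt (K ^ 2 - a ^ 2) = Real.arccos (a / K))
    (hka : a < k) (hkK : k < K)
    (hka' : 0 < k - a) (hTb : T * |a| ≤ 1 / 2) (hT1 : T ≤ 1 / 2)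
    (h1Tb : (0:ℝ) ≤ 1 - T * |a|)
    (hcase : k < |a|) :
    (1 - T * |a|) / (2 * (k - a)) ≤ fdel T a k := by
  have ha : a < 0 := by
    rcases le_or_gt 0 a with h | h
    · rw [abs_of_nonneg h] at hcase; linarith
    · exact h
  have hb : |a| = -a := abs_of_neg ha
  rw [hb] at hcase hTb h1Tb ⊢
  have hcond : |k| < -a := by rw [abs_lt]; constructor <;> linarith
  rw [fdel, if_pos hcond]
  set L := Real.sqrt (a ^ 2 - k ^ 2) with hL
  have hkk : k ^ 2 < a ^ 2 := by
    rcases le_or_gt 0 k with h | h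
    · nlinarith
    · nlinarith
  have hsq : 0 < a ^ 2 - k ^ 2 := by linarith
  have hL0 : 0 < L := Real.sqrt_pos.mpr hsq
  have hLsq : L ^ 2 = a ^ 2 - k ^ 2 := Real.sq_sqrt hsq.le
  have hLb : L ≤ -a := by
    rw [hL, show a ^ 2 - k ^ 2 = (-a) ^ 2 - k ^ 2 by ring]
    calc Real.sqrt ((-a) ^ 2 - k ^ 2) ≤ Real.sqrt ((-a) ^ 2) := by
          apply Real.sqrt_le_sqrt; nlinarith [sq_nonneg k]
      _ = -a := Real.sqrt_sq (by linarith)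
  set θ := L * T with hθ
  have hθ0 : 0 < θ := mul_pos hL0 hT
  have hθb : θ ≤ -a * T := mul_le_mul_of_nonneg_right hLb hT.le
  have hbT : -a * T ≤ 1 / 2 := by nlinarith
  have hθ1 : θ ≤ 1 / 2 := le_trans hθb hbT
  have hθsq : θ ^ 2 = (a ^ 2 - k ^ 2) * T ^ 2 := by rw [hθ, mul_pow, hLsq]
  have hch : Real.cosh θ ≤ 1 + θ ^ 2 := my_cosh_le_one_add_sq hθ0.le (by linarith)
  have hch1 : 1 ≤ Real.cosh θ := Real.one_le_cosh θ
  have hsh0 : 0 ≤ Real.sinh θ := Real.sinh_nonneg_iff.mpr hθ0.le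
  have hshθ : Real.sinh θ ≤ θ * Real.cosh θ := my_sinh_le_mul_cosh hθ0.le
  -- denominator is negative : a < k * cosh θ
  have hD : a < k * Real.cosh θ := by
    rcases le_or_gt 0 k with hk0 | hk0
    · nlinarith
    · have hmk : 0 < -k := by linarith
      have hkb : -k < -a := by nlinarith [abs_lt.mp hcond]
      have hθ2 : θ ^ 2 ≤ ((-a) - (-k)) * (2 * (-a)) * T ^ 2 := by
        rw [hθsq]; nlinarith
      have e1 : (-k) * θ ^ 2 ≤ ((-a) - (-k)) * (2 * (-a) * (-k) * T ^ 2) := by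
        nlinarith [mul_le_mul_of_nonneg_left hθ2 hmk.le]
      have e2 : 2 * (-a) * (-k) * T ^ 2 ≤ 1 / 2 := by
        nlinarith [sq_nonneg T, mul_pos hT hT]
      have e3 : (-k) * θ ^ 2 ≤ ((-a) - (-k)) * (1 / 2) := by
        calc (-k) * θ ^ 2 ≤ ((-a) - (-k)) * (2 * (-a) * (-k) * T ^ 2) := e1
          _ ≤ ((-a) - (-k)) * (1 / 2) :=
            mul_le_mul_of_nonneg_left e2 (by linarith)
      have key : (-k) * Real.cosh θ < -a := by nlinarith
      nlinarith
  have hDpos : 0 < k * Real.cosh θ - a := by linarith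
  -- numerator bound
  have hN : (1 - T * -a) * L ≤ k * Real.sinh θ + L := by
    rcases le_or_gt 0 k with hk0 | hk0
    · nlinarith
    · have hmk : 0 < -k := by linarith
      have h1 : (-k) * Real.sinh θ ≤ θ * (-a) := by
        calc (-k) * Real.sinh θ ≤ (-k) * (θ * Real.cosh θ) :=
              mul_le_mul_of_nonneg_left hshθ hmk.le
          _ = θ * ((-k) * Real.cosh θ) := by ring
          _ ≤ θ * (-a) := by nlinarith
      have h2 : θ * (-a) ≤ (T * -a) * L := by
        rw [hθ]; nlinarith
      nlinarith
  have heq : (-k * Real.sinh θ - L) / (2 * L * (a - k * Real.cosh θ)) =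
      (k * Real.sinh θ + L) / (2 * L * (k * Real.cosh θ - a)) := by
    rw [show (-k * Real.sinh θ - L) = -(k * Real.sinh θ + L) by ring,
      show 2 * L * (a - k * Real.cosh θ) = -(2 * L * (k * Real.cosh θ - a)) by ring,
      neg_div_neg_eq]
  rw [heq, div_le_div_iff₀ (by positivity) (by nlinarith [mul_pos hL0 hDpos])]
  rcases le_or_gt 0 k with hk0 | hk0
  · -- stronger bound via cosh - sinh = exp(-θ) ≤ 1
    have hexp : Real.cosh θ - Real.sinh θ ≤ 1 := by
      rw [Real.cosh_sub_sinh]; exact Real.exp_le_one_iff.mpr (by linarith)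
    have hfact : L * (Real.cosh θ - 1) ≤ Real.sinh θ * (k - a) := by
      calc L * (Real.cosh θ - 1) ≤ L * Real.sinh θ :=
          mul_le_mul_of_nonneg_left (by linarith) hL0.le
        _ ≤ (k - a) * Real.sinh θ := mul_le_mul_of_nonneg_right (by linarith) hsh0
        _ = Real.sinh θ * (k - a) := by ring
    have hDk : L * (k * Real.cosh θ - a) ≤ (k * Real.sinh θ + L) * (k - a) := by
      nlinarith [mul_le_mul_of_nonneg_left hfact hk0]
    nlinarith [mul_pos hL0 hDpos, mul_le_mul_of_nonneg_left hDk (by norm_num : (0:ℝ) ≤ 2)]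
  · have hDk2 : k * Real.cosh θ - a ≤ k - a := by nlinarith
    nlinarith [mul_le_mul_of_nonneg_left hDk2
        (mul_nonneg (by linarith : (0:ℝ) ≤ 2 * L) h1Tb),
      mul_le_mul_of_nonneg_right hN (by linarith : (0:ℝ) ≤ 2 * (k - a)),
      mul_pos hL0 hDpos]

set_option maxHeartbeats 1000000 in
lemma fdel_lower_mid (a T K k : ℝ) (hT : 0 < T) (hTa : T * (|a| + 1) ≤ 1 / 2)
    (hKa : |a| < K) (hKeq : T * Real.sqrt (K ^ 2 - a ^ 2) = Real.arccos (a / K))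
    (hka : a < k) (hkK : k < K)
    (hka' : 0 < k - a) (hTb : T * |a| ≤ 1 / 2) (hT1 : T ≤ 1 / 2)
    (h1Tb : (0:ℝ) ≤ 1 - T * |a|)
    (hcase : k = |a|) :
    (1 - T * |a|) / (2 * (k - a)) ≤ fdel T a k := by
  have ha : a < 0 := by
    rcases le_or_gt 0 a with h | h
    · rw [abs_of_nonneg h] at hcase; rw [hcase] at hka; linarith
    · exact h
  have hb : |a| = -a := abs_of_neg ha
  have hcond1 : ¬ |k| < -a := by rw [hcase, abs_abs, hb]; simp
  have hcond2 : k = |a| ∧ a ≠ 0 := ⟨hcase, ne_of_lt ha⟩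
  rw [fdel, if_neg hcond1, if_pos hcond2]
  have habs : 0 < |a| := abs_pos.mpr (ne_of_lt ha)
  have hkval : k - a = 2 * |a| := by rw [hcase, hb]; ring
  rw [hkval]
  have h1 : (1 - T * |a|) / (2 * (2 * |a|)) ≤ 1 / (4 * |a|) :=
    div_le_div₀ (by norm_num) (by nlinarith [abs_nonneg a]) (by linarith)
      (le_of_eq (by ring))
  have h2 : (0:ℝ) < T / 4 := by linarith
  linarith

set_option maxHeartbeats 1000000 in
lemma fdel_lower_ell (a T K k : ℝ) (hT : 0 < T) (hTa : T * (|a| + 1) ≤ 1 / 2)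
    (hKa : |a| < K) (hKeq : T * Real.sqrt (K ^ 2 - a ^ 2) = Real.arccos (a / K))
    (hka : a < k) (hkK : k < K)
    (hka' : 0 < k - a) (hTb : T * |a| ≤ 1 / 2) (hT1 : T ≤ 1 / 2)
    (h1Tb : (0:ℝ) ≤ 1 - T * |a|)
    (hcase : |a| < k) :
    (1 - T * |a|) / (2 * (k - a)) ≤ fdel T a k := by
  have hk0 : 0 < k := lt_of_le_of_lt (abs_nonneg a) hcase
  have hcond1 : ¬ |k| < -a := by
    rw [abs_of_pos hk0]; have := neg_le_abs a; push_neg; linarith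
  have hcond2 : ¬ (k = |a| ∧ a ≠ 0) := by
    rintro ⟨h, -⟩; rw [h] at hcase; exact lt_irrefl _ hcase
  rw [fdel, if_neg hcond1, if_neg hcond2]
  set L := Real.sqrt (k ^ 2 - a ^ 2) with hL
  have hsq : 0 < k ^ 2 - a ^ 2 := by nlinarith [sq_abs a, abs_nonneg a]
  have hL0 : 0 < L := Real.sqrt_pos.mpr hsq
  set θ := L * T with hθ
  have hθ0 : 0 < θ := mul_pos hL0 hT
  have hKsq : 0 < K ^ 2 - a ^ 2 := by nlinarith [sq_abs a, abs_nonneg a]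
  have hKL0 : 0 < Real.sqrt (K ^ 2 - a ^ 2) := Real.sqrt_pos.mpr hKsq
  have hφK : Real.arccos (a / K) / Real.sqrt (K ^ 2 - a ^ 2) = T := by
    rw [← hKeq]; field_simp
  have hphi := phi_strictAnti a (Set.mem_Ioi.mpr hcase) (Set.mem_Ioi.mpr hKa) hkK
  simp only [hφK] at hphi
  have hθarc : θ < Real.arccos (a / k) := by
    rw [hθ, mul_comm]
    exact (lt_div_iff₀ hL0).mp hphi
  have harc_pi : Real.arccos (a / k) ≤ Real.pi := Real.arccos_le_pi _
  have hsin : 0 ≤ Real.sin θ :=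
    Real.sin_nonneg_of_nonneg_of_le_pi hθ0.le (by linarith)
  have hak1 : -1 ≤ a / k := by
    rw [le_div_iff₀ hk0]; nlinarith [neg_abs_le a]
  have hak2 : a / k ≤ 1 := by
    rw [div_le_iff₀ hk0, one_mul]; nlinarith [le_abs_self a]
  have hcos : a / k < Real.cos θ := by
    have := Real.cos_lt_cos_of_nonneg_of_le_pi hθ0.le harc_pi hθarc
    rwa [Real.cos_arccos hak1 hak2] at this
  have hD : 0 < k * Real.cos θ - a := by
    have := (div_lt_iff₀ hk0).mp hcos; nlinarith
  have hD2 : k * Real.cos θ - a ≤ k - a := by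
    nlinarith [Real.cos_le_one θ]
  have hN : (1 - T * |a|) * L ≤ k * Real.sin θ + L := by
    nlinarith [mul_nonneg hk0.le hsin, mul_nonneg (mul_nonneg hT.le (abs_nonneg a)) hL0.le]
  have heq : (-k * Real.sin θ - L) / (2 * L * (a - k * Real.cos θ)) =
      (k * Real.sin θ + L) / (2 * L * (k * Real.cos θ - a)) := by
    rw [show (-k * Real.sin θ - L) = -(k * Real.sin θ + L) by ring,
      show 2 * L * (a - k * Real.cos θ) = -(2 * L * (k * Real.cos θ - a)) by ring,
      neg_div_neg_eq]
  rw [heq, div_le_div_iff₀ (by positivity) (by nlinarith [mul_pos hL0 hD])]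
  nlinarith [mul_le_mul_of_nonneg_left hD2
      (mul_nonneg (by linarith : (0:ℝ) ≤ 2 * L) h1Tb),
    mul_le_mul_of_nonneg_right hN (by linarith : (0:ℝ) ≤ 2 * (k - a)),
    mul_pos hL0 hD]

lemma fdel_lower (a T K k : ℝ) (hT : 0 < T) (hTa : T * (|a| + 1) ≤ 1 / 2)
    (hKa : |a| < K) (hKeq : T * Real.sqrt (K ^ 2 - a ^ 2) = Real.arccos (a / K))
    (hk : k ∈ Set.Ioo a K) :
    (1 - T * |a|) / (2 * (k - a)) ≤ fdel T a k := by
    obtain ⟨hka, hkK⟩ := hk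
    have hka' : 0 < k - a := by linarith
    have hTb : T * |a| ≤ 1 / 2 := by nlinarith [abs_nonneg a]
    have hT1 : T ≤ 1 / 2 := by nlinarith [abs_nonneg a]
    have h1Tb : (0:ℝ) ≤ 1 - T * |a| := by linarith
    rcases lt_trichotomy k |a| with hcase | hcase | hcase
    · exact fdel_lower_hyp a T K k hT hTa hKa hKeq hka hkK hka' hTb hT1 h1Tb hcase
    · exact fdel_lower_mid a T K k hT hTa hKa hKeq hka hkK hka' hTb hT1 h1Tb hcase
    · exact fdel_lower_ell a T K k hT hTa hKa hKeq hka hkK hka' hTb hT1 h1Tb hcase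

lemma ku_gt (a : ℝ) (ku : ℝ → ℝ)
    (hku : ∀ T : ℝ, 0 < T → a * T < 1 →
      |a| < ku T ∧ T * Real.sqrt ((ku T) ^ 2 - a ^ 2) = Real.arccos (a / ku T))
    (M : ℝ) (hM : |a| < M) :
    ∀ᶠ T in nhdsWithin 0 (Set.Ioi (0 : ℝ)), M < ku T := by
  have hM0 : 0 < M := lt_of_le_of_lt (abs_nonneg a) hM
  have hMsq : 0 < M ^ 2 - a ^ 2 := by nlinarith [sq_abs a, abs_nonneg a]
  have harc : 0 < Real.arccos (a / M) :=
    Real.arccos_pos.mpr ((div_lt_one hM0).mpr (lt_of_le_of_lt (le_abs_self a) hM))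
  set φM := Real.arccos (a / M) / Real.sqrt (M ^ 2 - a ^ 2) with hφM
  have hφM0 : 0 < φM := div_pos harc (Real.sqrt_pos.mpr hMsq)
  set δ := min φM (1 / (|a| + 1)) with hδ
  have hδ0 : 0 < δ := lt_min hφM0 (by positivity)
  have hIoo : Set.Ioo (0:ℝ) δ ∈ nhdsWithin 0 (Set.Ioi (0:ℝ)) :=
    Ioo_mem_nhdsGT_of_mem ⟨le_refl 0, hδ0⟩
  filter_upwards [hIoo] with T hT
  obtain ⟨hT0, hTδ⟩ := hT
  have haT : a * T < 1 := by
    have h1 : a * T ≤ |a| * T := mul_le_mul_of_nonneg_right (le_abs_self a) hT0.le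
    have h2 : T < 1 / (|a| + 1) := lt_of_lt_of_le hTδ (min_le_right _ _)
    have h5 : T * (|a| + 1) < 1 := (lt_div_iff₀ (by positivity)).mp h2
    nlinarith [abs_nonneg a]
  obtain ⟨hku1, hku2⟩ := hku T hT0 haT
  by_contra hc
  push_neg at hc
  have hkuM : Real.arccos (a / ku T) / Real.sqrt ((ku T) ^ 2 - a ^ 2) = T := by
    rw [← hku2]
    have : 0 < Real.sqrt ((ku T) ^ 2 - a ^ 2) :=
      Real.sqrt_pos.mpr (by nlinarith [sq_abs a, abs_nonneg a])
    field_simp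
  have := (phi_strictAnti a).antitoneOn (Set.mem_Ioi.mpr hku1) (Set.mem_Ioi.mpr hM) hc
  rw [hkuM] at this
  have hTφ : T < φM := lt_of_lt_of_le hTδ (min_le_left _ _)
  rw [hφM] at hTφ
  linarith

lemma fdel_tendsto (a k : ℝ) (hka : a < k) (hk0 : 0 < k) :
    Filter.Tendsto (fun T => fdel T a k) (nhdsWithin 0 (Set.Ioi (0:ℝ)))
      (nhds (1 / (2 * (k - a)))) := by
  rcases lt_trichotomy k |a| with hcase | hcase | hcase
  · -- hyperbolic
    have ha : a < 0 := by
      rcases le_or_gt 0 a with h | h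
      · rw [abs_of_nonneg h] at hcase; linarith
      · exact h
    have hcond : |k| < -a := by
      rw [abs_lt]; rw [abs_of_neg ha] at hcase; constructor <;> linarith
    have hsq : 0 < a ^ 2 - k ^ 2 := by
      nlinarith [sq_abs k, sq_abs a, abs_nonneg k, abs_lt.mp hcond]
    set L := Real.sqrt (a ^ 2 - k ^ 2) with hL
    have hL0 : 0 < L := Real.sqrt_pos.mpr hsq
    have hfd : ∀ T : ℝ, fdel T a k =
        (-k * Real.sinh (L * T) - L) / (2 * L * (a - k * Real.cosh (L * T))) := by
      intro T; rw [fdel, if_pos hcond]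
    simp only [hfd]
    have hden : 2 * L * (a - k * Real.cosh (L * 0)) ≠ 0 := by
      simp only [mul_zero, Real.cosh_zero, mul_one]
      exact ne_of_lt (by nlinarith)
    have hnum' : ContinuousAt (fun T : ℝ => -k * Real.sinh (L * T) - L) 0 := by fun_prop
    have hden' : ContinuousAt (fun T : ℝ => 2 * L * (a - k * Real.cosh (L * T))) 0 := by fun_prop
    have hc : ContinuousAt
        (fun T : ℝ => (-k * Real.sinh (L * T) - L) / (2 * L * (a - k * Real.cosh (L * T)))) 0 :=
      hnum'.div hden' hden
    have htd := hc.tendsto.mono_left (nhdsWithin_le_nhds (s := Set.Ioi (0:ℝ)))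
    convert htd using 2
    simp only [mul_zero, Real.sinh_zero, Real.cosh_zero, mul_one]
    rw [div_eq_div_iff (show (2:ℝ) * (k - a) ≠ 0 from ne_of_gt (by linarith)) (show 2 * L * (a - k) ≠ 0 from ne_of_lt (by nlinarith))]
    ring
  · -- middle : k = |a|, a ≠ 0
    have ha : a < 0 := by
      rcases le_or_gt 0 a with h | h
      · rw [abs_of_nonneg h] at hcase; rw [hcase] at hka; linarith
      · exact h
    have hcond1 : ¬ |k| < -a := by rw [hcase, abs_abs, abs_of_neg ha]; simp
    have hfd : ∀ T : ℝ, fdel T a k = T / 4 + 1 / (4 * |a|) := by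
      intro T; rw [fdel, if_neg hcond1, if_pos ⟨hcase, ne_of_lt ha⟩]
    simp only [hfd]
    have hval : 1 / (2 * (k - a)) = 0 / 4 + 1 / (4 * |a|) := by
      rw [hcase, abs_of_neg ha]; ring_nf
    rw [hval]
    apply Filter.Tendsto.mono_left _ nhdsWithin_le_nhds
    exact ((continuousAt_id.div_const 4).add continuousAt_const).tendsto
  · -- elliptic
    have hcond1 : ¬ |k| < -a := by
      rw [abs_of_pos hk0]; push_neg; linarith [neg_le_abs a]
    have hcond2 : ¬ (k = |a| ∧ a ≠ 0) := by
      rintro ⟨h, -⟩; rw [h] at hcase; exact lt_irrefl _ hcase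
    have hsq : 0 < k ^ 2 - a ^ 2 := by nlinarith [sq_abs a, abs_nonneg a]
    set L := Real.sqrt (k ^ 2 - a ^ 2) with hL
    have hL0 : 0 < L := Real.sqrt_pos.mpr hsq
    have hfd : ∀ T : ℝ, fdel T a k =
        (-k * Real.sin (L * T) - L) / (2 * L * (a - k * Real.cos (L * T))) := by
      intro T; rw [fdel, if_neg hcond1, if_neg hcond2]
    simp only [hfd]
    have hden : 2 * L * (a - k * Real.cos (L * 0)) ≠ 0 := by
      simp only [mul_zero, Real.cos_zero, mul_one]
      exact ne_of_lt (by nlinarith)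
    have hnum' : ContinuousAt (fun T : ℝ => -k * Real.sin (L * T) - L) 0 := by fun_prop
    have hden' : ContinuousAt (fun T : ℝ => 2 * L * (a - k * Real.cos (L * T))) 0 := by fun_prop
    have hc : ContinuousAt
        (fun T : ℝ => (-k * Real.sin (L * T) - L) / (2 * L * (a - k * Real.cos (L * T)))) 0 :=
      hnum'.div hden' hden
    have htd := hc.tendsto.mono_left (nhdsWithin_le_nhds (s := Set.Ioi (0:ℝ)))
    convert htd using 2
    simp only [mul_zero, Real.sin_zero, Real.cos_zero, mul_one]
    rw [div_eq_div_iff (show (2:ℝ) * (k - a) ≠ 0 from ne_of_gt (by linarith)) (show 2 * L * (a - k) ≠ 0 from ne_of_lt (by nlinarith))]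
    ring

set_option maxHeartbeats 1000000 in
theorem stmt10 (a r : ℝ) (hr : 0 < r)
    (ku : ℝ → ℝ)
    (hku : ∀ T : ℝ, 0 < T → a * T < 1 →
      |a| < ku T ∧ T * Real.sqrt ((ku T) ^ 2 - a ^ 2) = Real.arccos (a / ku T))
    (kstar : ℝ → ℝ)
    (hmin : ∀ᶠ T in nhdsWithin 0 (Set.Ioi (0 : ℝ)), kstar T ∈ Set.Ioo a (ku T) ∧
      ∀ k ∈ Set.Ioo a (ku T),
        (1 + r * (kstar T) ^ 2) * fdel T a (kstar T) ≤ (1 + r * k ^ 2) * fdel T a k) :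
    Filter.Tendsto
      (fun T : ℝ => kstar T /
        ((a + Real.sqrt (a ^ 2 + 1 / r)) -
          (a * (a + Real.sqrt (a ^ 2 + 1 / r)) + 1 / r) * T))
      (nhdsWithin 0 (Set.Ioi (0 : ℝ))) (nhds 1) := by
  obtain ⟨k0, hk0def⟩ : ∃ k0 : ℝ, k0 = a + Real.sqrt (a ^ 2 + 1 / r) := ⟨_, rfl⟩
  rw [← hk0def]
  have hspos : 0 < a ^ 2 + 1 / r := by positivity
  have hsa : |a| < Real.sqrt (a ^ 2 + 1 / r) := by
    rw [← Real.sqrt_sq_eq_abs]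
    exact Real.sqrt_lt_sqrt (sq_nonneg a) (by nlinarith [one_div_pos.mpr hr])
  have hk0a : a < k0 := by
    have := Real.sqrt_pos.mpr hspos; rw [hk0def]; linarith
  have hk00 : 0 < k0 := by
    have := neg_abs_le a; rw [hk0def]; linarith
  have hmain : Filter.Tendsto kstar (nhdsWithin 0 (Set.Ioi (0:ℝ))) (nhds k0) := by
    rw [Metric.tendsto_nhds]
    intro ε hε
    obtain ⟨ε', hε'def⟩ : ∃ x : ℝ, x = min ε ((k0 - a) / 2) := ⟨_, rfl⟩
    have hε'0 : 0 < ε' := hε'def ▸ lt_min hε (by linarith)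
    have hε'le : ε' ≤ ε := hε'def ▸ min_le_left _ _
    have hε'half : ε' ≤ (k0 - a) / 2 := hε'def ▸ min_le_right _ _
    have hε'a : a < k0 - ε' := by linarith
    obtain ⟨F, hF⟩ : ∃ F : ℝ → ℝ, F = fun k : ℝ => (1 + r * k ^ 2) / (2 * (k - a)) := ⟨_, rfl⟩
    have hFk0pos : 0 < F k0 := by
      rw [hF]; exact div_pos (by positivity) (by linarith)
    have hanti := F_anti a r hr
    have hmono := F_mono a r hr
    rw [← hk0def, ← hF] at hanti hmono
    have hlow : F k0 < F (k0 - ε') :=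
      hanti ⟨hε'a, by linarith⟩ ⟨hk0a, le_refl _⟩ (by linarith)
    have hhigh : F k0 < F (k0 + ε') :=
      hmono Set.self_mem_Ici (Set.mem_Ici.mpr (by linarith)) (by linarith)
    obtain ⟨mε, hmε⟩ : ∃ x : ℝ, x = min (F (k0 - ε')) (F (k0 + ε')) := ⟨_, rfl⟩
    have hmm : F k0 < mε := hmε ▸ lt_min hlow hhigh
    obtain ⟨δ, hδdef⟩ : ∃ x : ℝ, x = (mε - F k0) / 2 := ⟨_, rfl⟩
    have hδ0 : 0 < δ := by rw [hδdef]; linarith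
    have hJ : Filter.Tendsto (fun T => (1 + r * k0 ^ 2) * fdel T a k0)
        (nhdsWithin 0 (Set.Ioi (0:ℝ))) (nhds (F k0)) := by
      have h := (fdel_tendsto a k0 hk0a hk00).const_mul (1 + r * k0 ^ 2)
      have hval : (1 + r * k0 ^ 2) * (1 / (2 * (k0 - a))) = F k0 := by rw [hF]; ring
      rwa [hval] at h
    have h1 : ∀ᶠ T in nhdsWithin 0 (Set.Ioi (0:ℝ)),
        (1 + r * k0 ^ 2) * fdel T a k0 < F k0 + δ :=
      hJ.eventually_lt_const (by linarith)
    have h2 : ∀ᶠ T in nhdsWithin 0 (Set.Ioi (0:ℝ)), F k0 + δ < (1 - T * |a|) * mε := by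
      have hlim : Filter.Tendsto (fun T : ℝ => (1 - T * |a|) * mε)
          (nhdsWithin 0 (Set.Ioi (0:ℝ))) (nhds mε) := by
        have hct : ContinuousAt (fun T : ℝ => (1 - T * |a|) * mε) 0 := by fun_prop
        have h := hct.tendsto.mono_left (nhdsWithin_le_nhds (s := Set.Ioi (0:ℝ)))
        simpa using h
      exact hlim.eventually_const_lt (by rw [hδdef]; linarith)
    have h3 := ku_gt a ku hku (max k0 |a| + 1)
      (lt_of_le_of_lt (le_max_right k0 |a|) (by linarith))
    have h4 : Set.Ioo (0:ℝ) (1 / (2 * (|a| + 1))) ∈ nhdsWithin 0 (Set.Ioi (0:ℝ)) :=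
      Ioo_mem_nhdsGT_of_mem ⟨le_refl 0, by positivity⟩
    filter_upwards [hmin, h1, h2, h3, h4] with T hminT h1T h2T h3T h4T
    obtain ⟨hT0, hTsmall⟩ := h4T
    have hTa2 : T * (|a| + 1) ≤ 1 / 2 := by
      rw [lt_div_iff₀ (by positivity)] at hTsmall
      nlinarith
    have haT : a * T < 1 := by nlinarith [le_abs_self a, abs_nonneg a]
    obtain ⟨hks, hopt⟩ := hminT
    have hkuT := hku T hT0 haT
    have hk0mem : k0 ∈ Set.Ioo a (ku T) :=
      ⟨hk0a, by have := le_max_left k0 |a|; linarith⟩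
    have hJle := hopt k0 hk0mem
    have hlb := fdel_lower a T (ku T) (kstar T) hT0 hTa2 hkuT.1 hkuT.2 hks
    have hkstar_pos : 0 < kstar T - a := by linarith [hks.1]
    have hJlb : (1 - T * |a|) * F (kstar T) ≤ (1 + r * (kstar T) ^ 2) * fdel T a (kstar T) := by
      have hmul := mul_le_mul_of_nonneg_left hlb
        (show (0:ℝ) ≤ 1 + r * (kstar T) ^ 2 by positivity)
      calc (1 - T * |a|) * F (kstar T)
          = (1 + r * (kstar T) ^ 2) * ((1 - T * |a|) / (2 * (kstar T - a))) := by rw [hF]; ring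
        _ ≤ _ := hmul
    rw [Real.dist_eq]
    by_contra hcon
    push_neg at hcon
    have hfar : ε' ≤ |kstar T - k0| := le_trans hε'le hcon
    have hFbig : mε ≤ F (kstar T) := by
      rcases le_abs.mp hfar with h | h
      · have hge : k0 + ε' ≤ kstar T := by linarith
        calc mε ≤ F (k0 + ε') := hmε ▸ min_le_right _ _
          _ ≤ F (kstar T) := hmono.monotoneOn (Set.mem_Ici.mpr (by linarith))
              (Set.mem_Ici.mpr (by linarith)) hge
      · have hle : kstar T ≤ k0 - ε' := by linarith
        calc mε ≤ F (k0 - ε') := hmε ▸ min_le_left _ _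
          _ ≤ F (kstar T) := hanti.antitoneOn ⟨hks.1, by linarith⟩ ⟨hε'a, by linarith⟩ hle
    have hTb' : 0 ≤ 1 - T * |a| := by nlinarith [abs_nonneg a]
    have hcontr : F k0 + δ < F k0 + δ := by
      calc F k0 + δ < (1 - T * |a|) * mε := h2T
        _ ≤ (1 - T * |a|) * F (kstar T) := mul_le_mul_of_nonneg_left hFbig hTb'
        _ ≤ (1 + r * (kstar T) ^ 2) * fdel T a (kstar T) := hJlb
        _ ≤ (1 + r * k0 ^ 2) * fdel T a k0 := hJle
        _ < F k0 + δ := h1T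
    exact lt_irrefl _ hcontr
  have hden : Filter.Tendsto (fun T : ℝ => k0 - (a * k0 + 1 / r) * T)
      (nhdsWithin 0 (Set.Ioi (0:ℝ))) (nhds k0) := by
    have hct : ContinuousAt (fun T : ℝ => k0 - (a * k0 + 1 / r) * T) 0 := by fun_prop
    have h := hct.tendsto.mono_left (nhdsWithin_le_nhds (s := Set.Ioi (0:ℝ)))
    simpa using h
  have hfin := hmain.div hden (ne_of_gt hk00)
  rw [div_self (ne_of_gt hk00)] at hfin
  exact hfin
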